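/- Let G be the group presented by three generators λ₁, λ₂, λ₃ subject to the two relations λ₂λ₃λ₁⁻¹λ₃⁻¹ = e and λ₁λ₃λ₂⁻¹λ₃⁻¹ = e, and let H be the group presented by two generators a, b subject to the single relation abab = baba. Then G and H are isomorphic as groups (an isomorphism is induced by a ↦ λ₁, b ↦ λ₁⁻¹λ₃). -/

import Mathlib

/-- Relators of `G`: `λ₂λ₃λ₁⁻¹λ₃⁻¹` and `λ₁λ₃λ₂⁻¹λ₃⁻¹` in the free group on
three generators `λ₁ = 0`, `λ₂ = 1`, `λ₃ = 2`. -/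
def relsG : Set (FreeGroup (Fin 3)) :=
  {FreeGroup.of 1 * FreeGroup.of 2 * (FreeGroup.of 0)⁻¹ * (FreeGroup.of 2)⁻¹,
   FreeGroup.of 0 * FreeGroup.of 2 * (FreeGroup.of 1)⁻¹ * (FreeGroup.of 2)⁻¹}

/-- Relator of `H`: `abab(baba)⁻¹` in the free group on two generators
`a = 0`, `b = 1`. -/
def relsH : Set (FreeGroup (Fin 2)) :=
  {FreeGroup.of 0 * FreeGroup.of 1 * FreeGroup.of 0 * FreeGroup.of 1 *
    (FreeGroup.of 1 * FreeGroup.of 0 * FreeGroup.of 1 * FreeGroup.of 0)⁻¹}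

lemma mk_rel_one {α : Type*} {rels : Set (FreeGroup α)} {r : FreeGroup α} (h : r ∈ rels) :
    (PresentedGroup.mk rels r : PresentedGroup rels) = 1 :=
  (QuotientGroup.eq_one_iff r).2 (Subgroup.subset_normalClosure h)

local notation "G" => PresentedGroup relsG
local notation "H" => PresentedGroup relsH

lemma relG1 : (PresentedGroup.of 1 * PresentedGroup.of 2 : G)
    = PresentedGroup.of 2 * PresentedGroup.of 0 := by
  have h : (PresentedGroup.of 1 * PresentedGroup.of 2 * (PresentedGroup.of 0)⁻¹ *
      (PresentedGroup.of 2)⁻¹ : G) = 1 := by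
    have := mk_rel_one (rels := relsG)
      (r := FreeGroup.of 1 * FreeGroup.of 2 * (FreeGroup.of 0)⁻¹ * (FreeGroup.of 2)⁻¹)
      (Set.mem_insert _ _)
    simpa only [map_mul, map_inv, PresentedGroup.of] using this
  have h' : (PresentedGroup.of 1 * PresentedGroup.of 2) *
      (PresentedGroup.of 2 * PresentedGroup.of 0 : G)⁻¹
      = PresentedGroup.of 1 * PresentedGroup.of 2 * (PresentedGroup.of 0)⁻¹ *
        (PresentedGroup.of 2)⁻¹ := by group
  exact mul_inv_eq_one.mp (h'.trans h)

lemma relG2 : (PresentedGroup.of 0 * PresentedGroup.of 2 : G)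
    = PresentedGroup.of 2 * PresentedGroup.of 1 := by
  have h : (PresentedGroup.of 0 * PresentedGroup.of 2 * (PresentedGroup.of 1)⁻¹ *
      (PresentedGroup.of 2)⁻¹ : G) = 1 := by
    have := mk_rel_one (rels := relsG)
      (r := FreeGroup.of 0 * FreeGroup.of 2 * (FreeGroup.of 1)⁻¹ * (FreeGroup.of 2)⁻¹)
      (Set.mem_insert_of_mem _ rfl)
    simpa only [map_mul, map_inv, PresentedGroup.of] using this
  have h' : (PresentedGroup.of 0 * PresentedGroup.of 2) *
      (PresentedGroup.of 2 * PresentedGroup.of 1 : G)⁻¹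
      = PresentedGroup.of 0 * PresentedGroup.of 2 * (PresentedGroup.of 1)⁻¹ *
        (PresentedGroup.of 2)⁻¹ := by group
  exact mul_inv_eq_one.mp (h'.trans h)

lemma relH : (PresentedGroup.of 0 * PresentedGroup.of 1 * PresentedGroup.of 0 *
    PresentedGroup.of 1 : H)
    = PresentedGroup.of 1 * PresentedGroup.of 0 * PresentedGroup.of 1 * PresentedGroup.of 0 := by
  have h : (PresentedGroup.of 0 * PresentedGroup.of 1 * PresentedGroup.of 0 *
      PresentedGroup.of 1 *
      (PresentedGroup.of 1 * PresentedGroup.of 0 * PresentedGroup.of 1 *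
        PresentedGroup.of 0)⁻¹ : H) = 1 := by
    have := mk_rel_one (rels := relsH)
      (r := FreeGroup.of 0 * FreeGroup.of 1 * FreeGroup.of 0 * FreeGroup.of 1 *
        (FreeGroup.of 1 * FreeGroup.of 0 * FreeGroup.of 1 * FreeGroup.of 0)⁻¹) rfl
    simpa only [map_mul, map_inv, PresentedGroup.of] using this
  exact mul_inv_eq_one.mp h

/-- `a ↦ λ₁`, `b ↦ λ₁⁻¹ λ₃`. -/
def fHG : Fin 2 → G := ![PresentedGroup.of 0, (PresentedGroup.of 0)⁻¹ * PresentedGroup.of 2]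

/-- `λ₁ ↦ a`, `λ₂ ↦ (ab)a(ab)⁻¹`, `λ₃ ↦ ab`. -/
def fGH : Fin 3 → H :=
  ![PresentedGroup.of 0,
    PresentedGroup.of 0 * PresentedGroup.of 1 * PresentedGroup.of 0 *
      (PresentedGroup.of 1)⁻¹ * (PresentedGroup.of 0)⁻¹,
    PresentedGroup.of 0 * PresentedGroup.of 1]

lemma hHG : ∀ r ∈ relsH, FreeGroup.lift fHG r = 1 := by
  intro r hr
  rcases hr with rfl
  simp only [map_mul, map_inv, FreeGroup.lift_apply_of, fHG]
  simp only [Matrix.cons_val_zero, Matrix.cons_val_one, Matrix.head_cons]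
  have h1 := relG1
  have h2 := relG2
  -- λ₁ λ₃² = λ₃² λ₁
  have key : (PresentedGroup.of 0 * (PresentedGroup.of 2 * PresentedGroup.of 2) : G)
      = PresentedGroup.of 2 * PresentedGroup.of 2 * PresentedGroup.of 0 := by
    calc (PresentedGroup.of 0 * (PresentedGroup.of 2 * PresentedGroup.of 2) : G)
        = (PresentedGroup.of 0 * PresentedGroup.of 2) * PresentedGroup.of 2 := by group
      _ = PresentedGroup.of 2 * (PresentedGroup.of 1 * PresentedGroup.of 2) := by
          rw [h2]; group
      _ = PresentedGroup.of 2 * (PresentedGroup.of 2 * PresentedGroup.of 0) := by rw [h1]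
      _ = PresentedGroup.of 2 * PresentedGroup.of 2 * PresentedGroup.of 0 := by group
  rw [mul_inv_eq_one]
  calc (PresentedGroup.of 0 * ((PresentedGroup.of 0)⁻¹ * PresentedGroup.of 2) *
        PresentedGroup.of 0 * ((PresentedGroup.of 0)⁻¹ * PresentedGroup.of 2) : G)
      = PresentedGroup.of 2 * PresentedGroup.of 2 := by group
    _ = (PresentedGroup.of 0)⁻¹ * (PresentedGroup.of 0 *
          (PresentedGroup.of 2 * PresentedGroup.of 2)) := by group
    _ = (PresentedGroup.of 0)⁻¹ * (PresentedGroup.of 2 * PresentedGroup.of 2 *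
          PresentedGroup.of 0) := by rw [key]
    _ = (PresentedGroup.of 0)⁻¹ * PresentedGroup.of 2 * PresentedGroup.of 0 *
          ((PresentedGroup.of 0)⁻¹ * PresentedGroup.of 2) * PresentedGroup.of 0 := by group

-- λ₂-image equals b⁻¹ a b in H
lemma hX : (PresentedGroup.of 0 * PresentedGroup.of 1 * PresentedGroup.of 0 *
    (PresentedGroup.of 1)⁻¹ * (PresentedGroup.of 0)⁻¹ : H)
    = (PresentedGroup.of 1)⁻¹ * PresentedGroup.of 0 * PresentedGroup.of 1 := by
  have hrel := relH
  calc (PresentedGroup.of 0 * PresentedGroup.of 1 * PresentedGroup.of 0 *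
        (PresentedGroup.of 1)⁻¹ * (PresentedGroup.of 0)⁻¹ : H)
      = (PresentedGroup.of 1)⁻¹ * (PresentedGroup.of 1 * PresentedGroup.of 0 *
          PresentedGroup.of 1 * PresentedGroup.of 0) *
          ((PresentedGroup.of 1)⁻¹ * (PresentedGroup.of 0)⁻¹) := by
        group
    _ = (PresentedGroup.of 1)⁻¹ * (PresentedGroup.of 0 * PresentedGroup.of 1 *
          PresentedGroup.of 0 * PresentedGroup.of 1) *
          ((PresentedGroup.of 1)⁻¹ * (PresentedGroup.of 0)⁻¹) := by
        rw [hrel]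
    _ = (PresentedGroup.of 1)⁻¹ * PresentedGroup.of 0 * PresentedGroup.of 1 := by group

lemma hGH : ∀ r ∈ relsG, FreeGroup.lift fGH r = 1 := by
  intro r hr
  rcases hr with rfl | rfl
  · simp only [map_mul, map_inv, FreeGroup.lift_apply_of, fGH]
    simp only [Matrix.cons_val_zero, Matrix.cons_val_one, Matrix.head_cons,
      Matrix.cons_val_two, Matrix.tail_cons]
    group
  · simp only [map_mul, map_inv, FreeGroup.lift_apply_of, fGH]
    simp only [Matrix.cons_val_zero, Matrix.cons_val_one, Matrix.head_cons,
      Matrix.cons_val_two, Matrix.tail_cons]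
    rw [hX]
    group

def φHG : PresentedGroup relsH →* G := PresentedGroup.toGroup hHG
def φGH : PresentedGroup relsG →* H := PresentedGroup.toGroup hGH

/-- the group `G = ⟨λ₁, λ₂, λ₃ ∣ λ₂λ₃λ₁⁻¹λ₃⁻¹ = e, λ₁λ₃λ₂⁻¹λ₃⁻¹ = e⟩`
is isomorphic to `H = ⟨a, b ∣ abab = baba⟩`, via an isomorphism induced by
`a ↦ λ₁`, `b ↦ λ₁⁻¹λ₃`. -/
theorem stmt3 :
    ∃ φ : PresentedGroup relsH ≃* PresentedGroup relsG,
      φ (PresentedGroup.of 0) = PresentedGroup.of 0 ∧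
      φ (PresentedGroup.of 1) = (PresentedGroup.of 0)⁻¹ * PresentedGroup.of 2 := by
  have hHG0 : φHG (PresentedGroup.of 0) = PresentedGroup.of 0 := PresentedGroup.toGroup.of hHG
  have hHG1 : φHG (PresentedGroup.of 1) = (PresentedGroup.of 0)⁻¹ * PresentedGroup.of 2 :=
    PresentedGroup.toGroup.of hHG
  have hGH0 : φGH (PresentedGroup.of 0) = PresentedGroup.of 0 := PresentedGroup.toGroup.of hGH
  have hGH1 : φGH (PresentedGroup.of 1) = PresentedGroup.of 0 * PresentedGroup.of 1 *
      PresentedGroup.of 0 * (PresentedGroup.of 1)⁻¹ * (PresentedGroup.of 0)⁻¹ :=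
    PresentedGroup.toGroup.of hGH
  have hGH2 : φGH (PresentedGroup.of 2) = PresentedGroup.of 0 * PresentedGroup.of 1 :=
    PresentedGroup.toGroup.of hGH
  have left : φGH.comp φHG = MonoidHom.id H := by
    apply PresentedGroup.ext
    intro x
    fin_cases x
    · show φGH (φHG (PresentedGroup.of 0)) = PresentedGroup.of 0
      rw [hHG0, hGH0]
    · show φGH (φHG (PresentedGroup.of 1)) = PresentedGroup.of 1
      rw [hHG1, map_mul, map_inv, hGH0, hGH2]
      group
  have right : φHG.comp φGH = MonoidHom.id G := by
    apply PresentedGroup.ext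
    intro x
    fin_cases x
    · show φHG (φGH (PresentedGroup.of 0)) = PresentedGroup.of 0
      rw [hGH0, hHG0]
    · show φHG (φGH (PresentedGroup.of 1)) = PresentedGroup.of 1
      rw [hGH1]
      simp only [map_mul, map_inv, hHG0, hHG1]
      have h1 := relG1
      have : (PresentedGroup.of 2 * PresentedGroup.of 0 * (PresentedGroup.of 2)⁻¹ : G)
          = PresentedGroup.of 1 := by
        rw [← h1]; group
      calc (PresentedGroup.of 0 * ((PresentedGroup.of 0)⁻¹ * PresentedGroup.of 2) *
            PresentedGroup.of 0 * ((PresentedGroup.of 0)⁻¹ * PresentedGroup.of 2)⁻¹ *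
            (PresentedGroup.of 0)⁻¹ : G)
          = PresentedGroup.of 2 * PresentedGroup.of 0 * (PresentedGroup.of 2)⁻¹ := by group
        _ = PresentedGroup.of 1 := this
    · show φHG (φGH (PresentedGroup.of 2)) = PresentedGroup.of 2
      rw [hGH2, map_mul, hHG0, hHG1]
      group
  refine ⟨{ toFun := φHG, invFun := φGH,
            left_inv := fun x => congrFun (congrArg DFunLike.coe left) x,
            right_inv := fun x => congrFun (congrArg DFunLike.coe right) x,
            map_mul' := map_mul φHG }, hHG0, hHG1⟩
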